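/- Let d ≥ 1 and ν ≥ 3 be integers. For θ = (θ₁,…,θ_d) ∈ ℝ^d let M(θ) be the ν×ν real symmetric matrix acting on f ∈ ℂ^ν by (M(θ)f)_j = f_j − f_ν for 1 ≤ j ≤ ν−1 and (M(θ)f)_ν = (ν−1+2d − 2Σ_{s=1}^d cos θ_s) f_ν − Σ_{j=1}^{ν−1} f_j. Then, with x = (ν+4d)/2: (i) ⋃_{θ ∈ ℝ^d} spec(M(θ)) = [0, x − √(x² − 4d)] ∪ {1} ∪ [ν, x + √(x² − 4d)]; and (ii) for every θ ∈ ℝ^d, the number 1 is an eigenvalue of M(θ) of multiplicity ν − 2 (a flat band of multiplicity ν − 2). -/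

import Mathlib

open scoped BigOperators
open Matrix Polynomial

noncomputable section

/-- The fiber Laplacian `M(θ)` of the maximal abelian covering of the fundamental graph
with vertices `v₁, …, v_ν`, edges `(v_j, v_ν)` for `j < ν−1` (zero index), and `d`
loops at `v_ν` with standard basis indices:
`(M(θ)f)_j = f_j − f_ν` for `j < ν−1`,
`(M(θ)f)_ν = (ν−1+2d − 2∑ cos θ_s) f_ν − ∑_{j<ν−1} f_j`. -/
def exLap (d ν : ℕ) (θ : Fin d → ℝ) : Matrix (Fin ν) (Fin ν) ℂ :=
  fun j k =>
    if (j : ℕ) = ν - 1 then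
      if (k : ℕ) = ν - 1 then
        (((ν : ℝ) - 1 + 2 * d - 2 * ∑ s, Real.cos (θ s) : ℝ) : ℂ)
      else -1
    else
      if k = j then 1
      else if (k : ℕ) = ν - 1 then -1 else 0

namespace SpecExAux

def Bmat (m : ℕ) (c lam : ℂ) : Matrix (Fin (m+1)) (Fin (m+1)) ℂ :=
  fun j k =>
    if j = Fin.last m then (if k = Fin.last m then lam - c else 1)
    else if k = j then lam - 1 else if k = Fin.last m then 1 else 0

def Emat (m : ℕ) (lam : ℂ) : Matrix (Fin (m+1)) (Fin (m+1)) ℂ :=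
  fun i j => if i = j then 1 else if i = Fin.last m then -(lam - 1)⁻¹ else 0

def Umat (m : ℕ) (c lam : ℂ) : Matrix (Fin (m+1)) (Fin (m+1)) ℂ :=
  fun i k => if i = Fin.last m then (if k = Fin.last m then lam - c - m * (lam - 1)⁻¹ else 0)
             else Bmat m c lam i k

lemma det_Emat (m : ℕ) (lam : ℂ) : (Emat m lam).det = 1 := by
  rw [Matrix.det_of_lowerTriangular]
  · simp [Emat]
  · intro i j hij
    have hij' : i < j := hij
    have h1 : i ≠ j := ne_of_lt hij'
    have h2 : i ≠ Fin.last m := by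
      intro h; subst h; exact absurd hij' (not_lt.mpr (Fin.le_last j))
    simp [Emat, h1, h2]

lemma mul_EB (m : ℕ) (c lam : ℂ) (hlam : lam ≠ 1) :
    Emat m lam * Bmat m c lam = Umat m c lam := by
  have hinv : lam - 1 ≠ 0 := sub_ne_zero.mpr hlam
  ext i k
  rw [Matrix.mul_apply]
  by_cases hi : i = Fin.last m
  · subst hi
    rw [Fin.sum_univ_castSucc]
    have hE : ∀ j : Fin m, Emat m lam (Fin.last m) j.castSucc = -(lam - 1)⁻¹ := by
      intro j
      have : Fin.last m ≠ j.castSucc := (Fin.castSucc_lt_last j).ne'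
      simp [Emat, this]
    have hElast : Emat m lam (Fin.last m) (Fin.last m) = 1 := by simp [Emat]
    by_cases hk : k = Fin.last m
    · subst hk
      have hB : ∀ j : Fin m, Bmat m c lam j.castSucc (Fin.last m) = 1 := by
        intro j
        have h1 : j.castSucc ≠ Fin.last m := (Fin.castSucc_lt_last j).ne
        simp [Bmat, h1, h1.symm]
      simp only [hE, hElast, hB, one_mul, mul_one]
      rw [Finset.sum_const, Finset.card_univ, Fintype.card_fin]
      simp [Umat, Bmat]
      ring
    · set k' : Fin m := k.castPred hk with hk'
      have hck : k'.castSucc = k := Fin.castSucc_castPred k hk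
      have hB : ∀ j : Fin m, Bmat m c lam j.castSucc k = if k' = j then lam - 1 else 0 := by
        intro j
        have h1 : j.castSucc ≠ Fin.last m := (Fin.castSucc_lt_last j).ne
        have h2 : (k = j.castSucc) ↔ (k' = j) := by
          rw [← hck, Fin.castSucc_inj]
        simp only [Bmat, if_neg h1]
        by_cases h : k' = j
        · rw [if_pos (h2.mpr h), if_pos h]
        · rw [if_neg (fun hh => h (h2.mp hh)), if_neg h, if_neg hk]
      have hBlast : Bmat m c lam (Fin.last m) k = 1 := by simp [Bmat, hk]
      simp only [hE, hElast, hB, one_mul, mul_ite, mul_zero]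
      rw [Finset.sum_ite_eq]
      simp [Umat, hk, hinv, hBlast]
  · have : ∀ j, Emat m lam i j * Bmat m c lam j k
        = if i = j then Bmat m c lam j k else 0 := by
      intro j
      by_cases h : i = j
      · simp [Emat, h]
      · simp [Emat, h, hi]
    simp only [this]
    rw [Finset.sum_ite_eq]
    simp [Umat, hi]

lemma det_Bmat (m : ℕ) (hm : 1 ≤ m) (c lam : ℂ) (hlam : lam ≠ 1) :
    (Bmat m c lam).det = (lam - 1) ^ (m - 1) * ((lam - 1) * (lam - c) - m) := by
  have hinv : lam - 1 ≠ 0 := sub_ne_zero.mpr hlam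
  have hdetU : (Umat m c lam).det = (lam - 1) ^ m * (lam - c - m * (lam - 1)⁻¹) := by
    rw [Matrix.det_of_upperTriangular]
    · rw [Fin.prod_univ_castSucc]
      have h1 : ∀ j : Fin m, Umat m c lam j.castSucc j.castSucc = lam - 1 := by
        intro j
        have h1 : j.castSucc ≠ Fin.last m := (Fin.castSucc_lt_last j).ne
        simp [Umat, Bmat, h1]
      have h2 : Umat m c lam (Fin.last m) (Fin.last m) = lam - c - m * (lam - 1)⁻¹ := by
        simp [Umat]
      rw [h2]
      simp only [h1]
      rw [Finset.prod_const, Finset.card_univ, Fintype.card_fin]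
    · intro i j hij
      have hij' : (j : Fin (m+1)) < i := hij
      have hjne : j ≠ Fin.last m := by
        intro h; subst h
        exact absurd (Fin.le_last i) (not_le.mpr hij')
      by_cases hi : i = Fin.last m
      · simp [Umat, hi, hjne]
      · have hji : ¬ (j = i) := ne_of_lt hij'
        simp [Umat, hi, Bmat, hjne, hji]
  have hdet := Matrix.det_mul (Emat m lam) (Bmat m c lam)
  rw [mul_EB m c lam hlam, det_Emat, one_mul] at hdet
  rw [← hdet, hdetU]
  obtain ⟨m', rfl⟩ : ∃ m', m = m' + 1 := ⟨m - 1, by omega⟩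
  simp only [Nat.add_sub_cancel]
  field_simp
  ring

lemma eval_charpoly' {n : ℕ} (M : Matrix (Fin n) (Fin n) ℂ) (lam : ℂ) :
    M.charpoly.eval lam = ((charmatrix M).map (eval lam)).det := by
  rw [Matrix.charpoly, ← coe_evalRingHom, RingHom.map_det]
  rfl

lemma charmatrix_exLap_map (d m : ℕ) (θ : Fin d → ℝ) (lam : ℂ) :
    (charmatrix (exLap d (m+1) θ)).map (eval lam)
      = Bmat m (((m+1 : ℕ) : ℝ) - 1 + 2 * d - 2 * ∑ s, Real.cos (θ s) : ℝ) lam := by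
  ext i j
  have hlast : ∀ i : Fin (m+1), ((i : ℕ) = (m+1) - 1) ↔ i = Fin.last m := by
    intro i
    simp [Fin.ext_iff]
  rw [Matrix.map_apply]
  by_cases h : i = j
  · subst h
    rw [charmatrix_apply_eq, eval_sub, eval_X, eval_C]
    by_cases hi : i = Fin.last m
    · simp only [exLap, Bmat, if_pos ((hlast i).mpr hi), if_pos hi]
    · simp only [exLap, Bmat, if_neg (fun hh => hi ((hlast i).mp hh)), if_neg hi, if_pos rfl]
      norm_num
  · rw [charmatrix_apply_ne _ _ _ h, eval_neg, eval_C]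
    by_cases hi : i = Fin.last m
    · have hj : ¬ j = Fin.last m := fun hh => h (hi.trans hh.symm)
      simp only [exLap, Bmat, if_pos ((hlast i).mpr hi), if_pos hi,
        if_neg (fun hh => hj ((hlast j).mp hh)), if_neg hj]
      norm_num
    · simp only [exLap, Bmat, if_neg (fun hh => hi ((hlast i).mp hh)), if_neg hi,
        if_neg (fun hh : j = i => h hh.symm), if_neg (Ne.symm h)]
      by_cases hj : j = Fin.last m
      · rw [if_pos ((hlast j).mpr hj), if_pos hj]; norm_num
      · rw [if_neg (fun hh => hj ((hlast j).mp hh)), if_neg hj]; norm_num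

lemma charpoly_exLap (d m : ℕ) (hm : 1 ≤ m) (θ : Fin d → ℝ) :
    (exLap d (m+1) θ).charpoly
      = (X - C 1) ^ (m - 1) *
        ((X - C 1) * (X - C ((((m+1 : ℕ) : ℝ) - 1 + 2 * d - 2 * ∑ s, Real.cos (θ s) : ℝ) : ℂ))
          - C (m : ℂ)) := by
  apply Polynomial.eq_of_infinite_eval_eq
  apply Set.Infinite.mono (s := {(1 : ℂ)}ᶜ)
  · intro lam hlam
    have hlam' : lam ≠ 1 := hlam
    simp only [Set.mem_setOf_eq]
    rw [eval_charpoly', charmatrix_exLap_map, det_Bmat m hm _ lam hlam']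
    simp only [eval_mul, eval_pow, eval_sub, eval_X, eval_C]
  · exact Set.Finite.infinite_compl (Set.finite_singleton 1)

/-- realize any `t ∈ [-d, d]` as a sum of `d` cosines -/
lemma exists_theta (d : ℕ) (hd : 1 ≤ d) (t : ℝ) (h1 : -(d : ℝ) ≤ t) (h2 : t ≤ d) :
    ∃ θ : Fin d → ℝ, ∑ s, Real.cos (θ s) = t := by
  have hd0 : (0 : ℝ) < d := by exact_mod_cast hd
  refine ⟨fun _ => Real.arccos (t / d), ?_⟩
  rw [Finset.sum_const, Finset.card_univ, Fintype.card_fin]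
  rw [Real.cos_arccos]
  · rw [nsmul_eq_mul]
    field_simp
  · rw [neg_le, ← neg_div]
    exact (div_le_one hd0).mpr (by linarith)
  · exact (div_le_one hd0).mpr h2

lemma sum_cos_mem (d : ℕ) (θ : Fin d → ℝ) :
    -(d : ℝ) ≤ ∑ s, Real.cos (θ s) ∧ (∑ s, Real.cos (θ s)) ≤ d := by
  constructor
  · calc -(d : ℝ) = ∑ _s : Fin d, (-1 : ℝ) := by
          rw [Finset.sum_const, Finset.card_univ, Fintype.card_fin, nsmul_eq_mul]; ring
      _ ≤ ∑ s, Real.cos (θ s) :=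
          Finset.sum_le_sum (fun s _ => Real.neg_one_le_cos (θ s))
  · calc (∑ s, Real.cos (θ s)) ≤ ∑ _s : Fin d, (1 : ℝ) :=
          Finset.sum_le_sum (fun s _ => Real.cos_le_one (θ s))
      _ = d := by rw [Finset.sum_const, Finset.card_univ, Fintype.card_fin, nsmul_eq_mul]; ring

variable {M D x s lam : ℝ}

lemma xs_bounds (hM : 2 ≤ M) (hD : 1 ≤ D) (h2x : 2*x = M + 1 + 4*D)
    (hs0 : 0 ≤ s) (hssq : s^2 = x^2 - 4*D) : x - s < 1 ∧ 1 < x + s := by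
  constructor
  · nlinarith [sq_nonneg (x - 1 - s), sq_nonneg (x - 1 + s)]
  · nlinarith [sq_nonneg (x - 1 - s), sq_nonneg (x - 1 + s)]

lemma forward_low (hM : 2 ≤ M) (hD : 1 ≤ D) (h2x : 2*x = M + 1 + 4*D)
    (hs0 : 0 ≤ s) (hssq : s^2 = x^2 - 4*D) {c : ℝ} (hc1 : M ≤ c) (hc2 : c ≤ M + 4*D)
    (hq : (lam - 1)*(lam - c) = M) (hlt : lam < 1) : 0 ≤ lam ∧ lam ≤ x - s := by
  obtain ⟨hx1, hx2⟩ := xs_bounds hM hD h2x hs0 hssq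
  have hp1 : lam * (lam - (M+1)) = (lam-1)*(c-M) := by linear_combination hq
  have hp2 : lam^2 - 2*x*lam + 4*D = (lam-1)*(c-(M+4*D)) := by
    linear_combination hq - lam * h2x
  have h4 : 0 ≤ lam^2 - 2*x*lam + 4*D := by
    nlinarith [mul_nonneg (by linarith : (0:ℝ) ≤ 1 - lam) (by linarith : (0:ℝ) ≤ M + 4*D - c)]
  constructor
  · nlinarith [hp1, mul_nonneg (sub_nonneg.2 hc1) (by linarith : (0:ℝ) ≤ 1 - lam)]
  · by_contra hcon
    push_neg at hcon
    nlinarith [h4, mul_pos (by linarith : (0:ℝ) < lam - (x - s))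
      (by linarith : (0:ℝ) < x + s - lam)]

lemma forward_high (hM : 2 ≤ M) (hD : 1 ≤ D) (h2x : 2*x = M + 1 + 4*D)
    (hs0 : 0 ≤ s) (hssq : s^2 = x^2 - 4*D) {c : ℝ} (hc1 : M ≤ c) (hc2 : c ≤ M + 4*D)
    (hq : (lam - 1)*(lam - c) = M) (hgt : 1 < lam) : M + 1 ≤ lam ∧ lam ≤ x + s := by
  have hp1 : lam * (lam - (M+1)) = (lam-1)*(c-M) := by linear_combination hq
  have hp2 : lam^2 - 2*x*lam + 4*D = (lam-1)*(c-(M+4*D)) := by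
    linear_combination hq - lam * h2x
  have h4 : lam^2 - 2*x*lam + 4*D ≤ 0 := by
    nlinarith [mul_nonneg (by linarith : (0:ℝ) ≤ lam - 1) (by linarith : (0:ℝ) ≤ M + 4*D - c)]
  constructor
  · nlinarith [hp1, mul_nonneg (by linarith : (0:ℝ) ≤ lam - 1) (by linarith : (0:ℝ) ≤ c - M)]
  · nlinarith [h4, hs0, sq_nonneg (lam - x - s)]

lemma backward_low (hM : 2 ≤ M) (hD : 1 ≤ D) (h2x : 2*x = M + 1 + 4*D)
    (hs0 : 0 ≤ s) (hssq : s^2 = x^2 - 4*D) (h0 : 0 ≤ lam) (h1 : lam ≤ x - s) :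
    ∃ c : ℝ, M ≤ c ∧ c ≤ M + 4*D ∧ (lam - 1)*(lam - c) = M := by
  obtain ⟨hx1, hx2⟩ := xs_bounds hM hD h2x hs0 hssq
  have hlt : lam < 1 := lt_of_le_of_lt h1 hx1
  have hne : lam - 1 ≠ 0 := by intro hh; nlinarith [sub_eq_zero.mp hh]
  have hq : (lam - 1)*(lam - (lam - M/(lam-1))) = M := by field_simp; ring
  set c := lam - M/(lam-1) with hc
  have hp1 : lam * (lam - (M+1)) = (lam-1)*(c-M) := by linear_combination hq
  have hp2 : lam^2 - 2*x*lam + 4*D = (lam-1)*(c-(M+4*D)) := by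
    linear_combination hq - lam * h2x
  refine ⟨c, ?_, ?_, hq⟩
  · by_contra hcon
    push_neg at hcon
    nlinarith [hp1, mul_nonneg h0 (by linarith : (0:ℝ) ≤ (M+1) - lam),
      mul_pos (by linarith : (0:ℝ) < 1 - lam) (by linarith : (0:ℝ) < M - c)]
  · by_contra hcon
    push_neg at hcon
    nlinarith [hp2, mul_nonneg (by linarith : (0:ℝ) ≤ x - s - lam)
        (by linarith : (0:ℝ) ≤ x + s - lam),
      mul_pos (by linarith : (0:ℝ) < 1 - lam) (by linarith : (0:ℝ) < c - (M+4*D))]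

lemma backward_high (hM : 2 ≤ M) (hD : 1 ≤ D) (h2x : 2*x = M + 1 + 4*D)
    (hs0 : 0 ≤ s) (hssq : s^2 = x^2 - 4*D) (h0 : M + 1 ≤ lam) (h1 : lam ≤ x + s) :
    ∃ c : ℝ, M ≤ c ∧ c ≤ M + 4*D ∧ (lam - 1)*(lam - c) = M := by
  obtain ⟨hx1, hx2⟩ := xs_bounds hM hD h2x hs0 hssq
  have hgt : 1 < lam := by linarith
  have hne : lam - 1 ≠ 0 := by intro hh; nlinarith [sub_eq_zero.mp hh]
  have hq : (lam - 1)*(lam - (lam - M/(lam-1))) = M := by field_simp; ring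
  set c := lam - M/(lam-1) with hc
  have hp1 : lam * (lam - (M+1)) = (lam-1)*(c-M) := by linear_combination hq
  have hp2 : lam^2 - 2*x*lam + 4*D = (lam-1)*(c-(M+4*D)) := by
    linear_combination hq - lam * h2x
  refine ⟨c, ?_, ?_, hq⟩
  · by_contra hcon
    push_neg at hcon
    nlinarith [hp1, mul_nonneg (by linarith : (0:ℝ) ≤ lam)
        (by linarith : (0:ℝ) ≤ lam - (M+1)),
      mul_pos (by linarith : (0:ℝ) < lam - 1) (by linarith : (0:ℝ) < M - c)]
  · by_contra hcon
    push_neg at hcon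
    nlinarith [hp2, mul_nonneg (by linarith : (0:ℝ) ≤ lam - (x - s))
        (by linarith : (0:ℝ) ≤ x + s - lam),
      mul_pos (by linarith : (0:ℝ) < lam - 1) (by linarith : (0:ℝ) < c - (M+4*D))]


end SpecExAux

open SpecExAux in
theorem spectrum_of_example_laplacian
    {d ν : ℕ} (hd : 1 ≤ d) (hν : 3 ≤ ν) (x : ℝ) (hx : x = ((ν : ℝ) + 4 * d) / 2) :
    (⋃ θ : Fin d → ℝ, {lam : ℝ | (lam : ℂ) ∈ spectrum ℂ (exLap d ν θ)})
      = Set.Icc 0 (x - Real.sqrt (x ^ 2 - 4 * d)) ∪ {1}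
        ∪ Set.Icc (ν : ℝ) (x + Real.sqrt (x ^ 2 - 4 * d))
    ∧ ∀ θ : Fin d → ℝ,
        (exLap d ν θ).charpoly.rootMultiplicity (1 : ℂ) = ν - 2 := by
  obtain ⟨m, rfl⟩ : ∃ m, ν = m + 1 := ⟨ν - 1, by omega⟩
  have hm : 2 ≤ m := by omega
  have hm1 : 1 ≤ m := by omega
  have hmR : (2 : ℝ) ≤ (m : ℝ) := by exact_mod_cast hm
  have hdR : (1 : ℝ) ≤ (d : ℝ) := by exact_mod_cast hd
  -- the real "corner entry" value
  set cc : (Fin d → ℝ) → ℝ :=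
    fun θ => (((m+1 : ℕ) : ℝ) - 1 + 2 * d - 2 * ∑ s, Real.cos (θ s)) with hcc
  have hccval : ∀ θ, cc θ = (m : ℝ) + 2 * d - 2 * ∑ s, Real.cos (θ s) := by
    intro θ; simp only [hcc]; push_cast; ring
  -- basic real quantities
  set s : ℝ := Real.sqrt (x ^ 2 - 4 * d) with hs
  have h2x : 2 * x = (m : ℝ) + 1 + 4 * d := by rw [hx]; push_cast; ring
  have hxpos : (0 : ℝ) < x := by nlinarith
  have hx4d : (0 : ℝ) ≤ x ^ 2 - 4 * d := by nlinarith
  have hs0 : 0 ≤ s := Real.sqrt_nonneg _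
  have hssq : s ^ 2 = x ^ 2 - 4 * d := Real.sq_sqrt hx4d
  have hxs1 : x - s < 1 ∧ 1 < x + s := by
    constructor <;> nlinarith
  constructor
  · -- the spectrum union
    ext lam
    simp only [Set.mem_iUnion, Set.mem_setOf_eq]
    -- characterize spectrum membership
    have key : ∀ θ : Fin d → ℝ,
        ((lam : ℂ) ∈ spectrum ℂ (exLap d (m+1) θ))
          ↔ (lam = 1 ∨ (lam - 1) * (lam - cc θ) = m) := by
      intro θ
      rw [spectrum.mem_iff, Matrix.isUnit_iff_isUnit_det, isUnit_iff_ne_zero, not_not]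
      have hdet : (algebraMap ℂ (Matrix (Fin (m+1)) (Fin (m+1)) ℂ) (lam : ℂ)
            - exLap d (m+1) θ).det
          = ((exLap d (m+1) θ).charpoly).eval (lam : ℂ) := by
        rw [eval_charpoly', charmatrix_exLap_map]
        congr 1
        ext i j
        rw [Algebra.algebraMap_eq_smul_one]
        have hlastiff : ∀ k : Fin (m+1), k = Fin.last m ↔ (k : ℕ) = m := by
          intro k; simp [Fin.ext_iff]
        simp only [Matrix.sub_apply, Matrix.smul_apply, Matrix.one_apply, smul_eq_mul,
          Bmat, exLap, Nat.add_sub_cancel]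
        by_cases hi : (i : ℕ) = m
        · have hiF : i = Fin.last m := (hlastiff i).mpr hi
          by_cases hj : (j : ℕ) = m
          · have h : i = j := Fin.ext_iff.mpr (hi.trans hj.symm)
            have hjF : j = Fin.last m := (hlastiff j).mpr hj
            rw [if_pos h, if_pos hi, if_pos hj, if_pos hiF, if_pos hjF]
            ring
          · have h : ¬ i = j := fun hh => hj (hh ▸ hi)
            have hjF : ¬ j = Fin.last m := fun hh => hj ((hlastiff j).mp hh)
            rw [if_neg h, if_pos hi, if_neg hj, if_pos hiF, if_neg hjF]
            ring
        · have hiF : ¬ i = Fin.last m := fun hh => hi ((hlastiff i).mp hh)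
          by_cases hj : (j : ℕ) = m
          · have h : ¬ i = j := fun hh => hi (hh ▸ hj)
            have hji : ¬ j = i := fun hh => h hh.symm
            have hjF : j = Fin.last m := (hlastiff j).mpr hj
            rw [if_neg h, if_neg hi, if_neg hiF, if_neg hji, if_neg hji, if_pos hj, if_pos hjF]
            ring
          · have hjF : ¬ j = Fin.last m := fun hh => hj ((hlastiff j).mp hh)
            by_cases h : i = j
            · rw [if_pos h, if_neg hi, if_neg hiF, if_pos h.symm, if_pos h.symm]
              ring
            · have hji : ¬ j = i := fun hh => h hh.symm
              rw [if_neg h, if_neg hi, if_neg hiF, if_neg hji, if_neg hji, if_neg hj, if_neg hjF]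
              ring
      rw [hdet, charpoly_exLap d m hm1 θ]
      simp only [eval_mul, eval_pow, eval_sub, eval_X, eval_C]
      rw [mul_eq_zero, pow_eq_zero_iff (by omega : m - 1 ≠ 0)]
      have hccrfl : (((m+1 : ℕ) : ℝ) - 1 + 2 * (d:ℝ) - 2 * ∑ s, Real.cos (θ s)) = cc θ := rfl
      rw [hccrfl]
      have hcast : ((lam : ℂ) - 1) * ((lam : ℂ) - ((cc θ : ℝ) : ℂ)) - (m : ℂ)
          = (((lam - 1) * (lam - cc θ) - m : ℝ) : ℂ) := by push_cast; ring
      constructor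
      · rintro (h | h)
        · left
          have : (lam : ℂ) = 1 := by linear_combination h
          exact_mod_cast this
        · right
          rw [hcast] at h
          have h' : ((lam - 1) * (lam - cc θ) - m : ℝ) = 0 := by exact_mod_cast h
          linarith
      · rintro (h | h)
        · left; rw [h]; norm_num
        · right; rw [hcast]
          have h' : ((lam - 1) * (lam - cc θ) - m : ℝ) = 0 := by linarith
          exact_mod_cast h'
    simp only [key]
    constructor
    · rintro ⟨θ, h | h⟩
      · exact Or.inl (Or.inr h)
      · obtain ⟨ht1, ht2⟩ := sum_cos_mem d θ
        have hc1 : (m : ℝ) ≤ cc θ := by rw [hccval θ]; linarith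
        have hc2 : cc θ ≤ (m : ℝ) + 4 * d := by rw [hccval θ]; linarith
        rcases lt_trichotomy lam 1 with hlt | heq | hgt
        · obtain ⟨ha, hb⟩ := forward_low hmR hdR h2x hs0 hssq hc1 hc2 h hlt
          exact Or.inl (Or.inl ⟨ha, hb⟩)
        · exact Or.inl (Or.inr heq)
        · obtain ⟨ha, hb⟩ := forward_high hmR hdR h2x hs0 hssq hc1 hc2 h hgt
          refine Or.inr ⟨?_, hb⟩
          push_cast
          linarith
    · rintro ((⟨h0, h1⟩ | h1) | ⟨h0, h1⟩)
      · obtain ⟨c, hc1, hc2, hq⟩ := backward_low hmR hdR h2x hs0 hssq h0 h1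
        obtain ⟨θ, hθ⟩ := exists_theta d hd (((m : ℝ) + 2 * d - c) / 2)
          (by linarith) (by linarith)
        refine ⟨θ, Or.inr ?_⟩
        have hceq : cc θ = c := by rw [hccval θ, hθ]; ring
        rw [hceq]; exact hq
      · exact ⟨fun _ => 0, Or.inl h1⟩
      · have h0' : (m : ℝ) + 1 ≤ lam := by push_cast at h0; linarith
        obtain ⟨c, hc1, hc2, hq⟩ := backward_high hmR hdR h2x hs0 hssq h0' h1
        obtain ⟨θ, hθ⟩ := exists_theta d hd (((m : ℝ) + 2 * d - c) / 2)
          (by linarith) (by linarith)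
        refine ⟨θ, Or.inr ?_⟩
        have hceq : cc θ = c := by rw [hccval θ, hθ]; ring
        rw [hceq]; exact hq
  · -- flat band multiplicity
    intro θ
    rw [charpoly_exLap d m hm1 θ]
    have hq0 : ((X - C 1) * (X - C ((((m+1 : ℕ) : ℝ) - 1 + 2 * d
          - 2 * ∑ s, Real.cos (θ s) : ℝ) : ℂ)) - C (m : ℂ)).eval 1 ≠ 0 := by
      simp only [eval_sub, eval_mul, eval_X, eval_C, sub_self, zero_mul, zero_sub, neg_ne_zero]
      exact_mod_cast (by omega : m ≠ 0)
    have hqne : ((X - C 1) * (X - C ((((m+1 : ℕ) : ℝ) - 1 + 2 * d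
          - 2 * ∑ s, Real.cos (θ s) : ℝ) : ℂ)) - C (m : ℂ)) ≠ 0 := by
      intro hh; rw [hh] at hq0; simp at hq0
    rw [Polynomial.rootMultiplicity_mul
      (mul_ne_zero (pow_ne_zero _ (X_sub_C_ne_zero 1)) hqne)]
    rw [Polynomial.rootMultiplicity_X_sub_C_pow]
    rw [Polynomial.rootMultiplicity_eq_zero hq0]
    omega

end
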